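/- Let μ be an odd integer and n = u² − 2w² with u, w as above, n ≡ 1 mod 8. If the equation X² + Y² = ε·μ is solvable in ℚ₂ for ε = 1 or ε = −1, then X² + Y² = ε·u − √n is solvable in ℚ₂, where √n ∈ ℚ₂ is a fixed square root of n. -/

import Mathlib

open PadicInt Polynomial

private lemma two_pow_dvd_iff (k : ℕ) (x : ℤ_[2]) :
    PadicInt.toZModPow (p := 2) k x = 0 ↔ (2 : ℤ_[2]) ^ k ∣ x := by
  rw [← RingHom.mem_ker, PadicInt.ker_toZModPow, Ideal.mem_span_singleton]
  norm_num

private lemma zmod2_sq (a : ZMod (2 ^ 1)) (h : a ^ 2 = 1) : a = 1 := by revert a h; decide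

private lemma zmod2_ne (a : ZMod (2 ^ 1)) (h : a ≠ 0) : a = 1 := by revert a h; decide

private lemma zmod4_sq (a : ZMod (2 ^ 2)) (h : (ZMod.cast a : ZMod (2 ^ 1)) = 1) :
    a ^ 2 = 1 := by revert a h; decide

private lemma zmod8_cases (a : ZMod (2 ^ 3)) (h : (ZMod.cast a : ZMod (2 ^ 2)) = 1) :
    a = 1 ∨ a = 5 := by revert a h; decide

private lemma key8 (x m W : ZMod (2 ^ 3)) (hx : (ZMod.cast x : ZMod (2 ^ 1)) = 1)
    (hm : (ZMod.cast m : ZMod (2 ^ 1)) = 1)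
    (h : x * ((m - 2 * W) - x) = 2 * W ^ 2) :
    (ZMod.cast (m * x) : ZMod (2 ^ 2)) = 1 := by revert x m W hx hm h; decide

private lemma sq_of_mod8 (v : ℤ_[2]) (h : PadicInt.toZModPow (p := 2) 3 v = 1) :
    ∃ z : ℤ_[2], z ^ 2 = v := by
  have h8 : (2 : ℤ_[2]) ^ 3 ∣ v - 1 := by
    rw [← two_pow_dvd_iff, map_sub, h, map_one, sub_self]
  obtain ⟨t, ht⟩ := h8
  have hev : (X ^ 2 - C v : Polynomial ℤ_[2]).eval 1 = 1 - v := by simp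
  have hdev : (X ^ 2 - C v : Polynomial ℤ_[2]).derivative.eval 1 = 2 := by
    simp [Polynomial.derivative_sub]
    norm_num
  have h2 : ‖(2 : ℤ_[2])‖ = 2⁻¹ := by
    have h := @PadicInt.norm_p 2 ⟨Nat.prime_two⟩
    have : ((2 : ℕ) : ℤ_[2]) = (2 : ℤ_[2]) := by norm_num
    rw [this] at h
    rw [h]; norm_num
  have hnorm : ‖(X ^ 2 - C v : Polynomial ℤ_[2]).eval 1‖ <
      ‖(X ^ 2 - C v : Polynomial ℤ_[2]).derivative.eval 1‖ ^ 2 := by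
    rw [hev, hdev, h2]
    have hle : ‖(1 : ℤ_[2]) - v‖ ≤ 8⁻¹ := by
      rw [show (1 : ℤ_[2]) - v = -(2 ^ 3 * t) by rw [← ht]; ring, norm_neg, norm_mul, norm_pow,
        h2]
      calc ((2 : ℝ)⁻¹) ^ 3 * ‖t‖ ≤ (2⁻¹) ^ 3 * 1 := by
            gcongr
            exact PadicInt.norm_le_one t
        _ = 8⁻¹ := by norm_num
    calc ‖(1 : ℤ_[2]) - v‖ ≤ 8⁻¹ := hle
      _ < (2⁻¹ : ℝ) ^ 2 := by norm_num
  obtain ⟨z, hz, -, -, -⟩ := hensels_lemma hnorm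
  refine ⟨z, ?_⟩
  have := hz
  simp only [Polynomial.coe_aeval_eq_eval, Polynomial.eval_sub, Polynomial.eval_pow, Polynomial.eval_X, Polynomial.eval_C] at this
  linear_combination this

private lemma sum2_of_mod4 (v : ℤ_[2]) (h : PadicInt.toZModPow (p := 2) 2 v = 1) :
    ∃ x y : ℤ_[2], x ^ 2 + y ^ 2 = v := by
  have h8 := zmod8_cases (PadicInt.toZModPow (p := 2) 3 v)
    (by rw [PadicInt.cast_toZModPow 2 3 (by norm_num)]; exact h)
  rcases h8 with h8 | h8
  · obtain ⟨z, hz⟩ := sq_of_mod8 v h8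
    exact ⟨z, 0, by rw [← hz]; ring⟩
  · have h4 : PadicInt.toZModPow (p := 2) 3 (v - 4) = 1 := by
      rw [map_sub, h8, map_ofNat]
      decide
    obtain ⟨z, hz⟩ := sq_of_mod8 (v - 4) h4
    exact ⟨2, z, by rw [hz]; ring⟩

/-- if `X² + Y² = ε·μ` is solvable in `ℚ₂` (ε = ±1), then so is
`X² + Y² = ε·u − √n`. -/
theorem stmt_2 (n : ℕ) (hn : Squarefree n) (hpos : 0 < n) (hn8 : n % 8 = 1)
    (μ τ u w : ℤ) (hμ : Odd μ) (hu : u = 2 * μ - τ) (hw : w = τ - μ)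
    (hrep : (n : ℤ) = u ^ 2 - 2 * w ^ 2)
    (r : ℚ_[2]) (hr : r ^ 2 = (n : ℚ_[2]))
    (ε : ℤ) (hε : ε = 1 ∨ ε = -1)
    (hsol : ∃ x y : ℚ_[2], x ^ 2 + y ^ 2 = ((ε * μ : ℤ) : ℚ_[2])) :
    ∃ X Y : ℚ_[2], X ^ 2 + Y ^ 2 = (ε : ℚ_[2]) * (u : ℚ_[2]) - r := by
  classical
  have hεQ : (ε : ℚ_[2]) * (ε : ℚ_[2]) = 1 := by
    rcases hε with h | h <;> rw [h] <;> norm_num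
  have hμz : μ ≠ 0 := by rintro rfl; exact (Int.not_odd_iff_even.mpr Even.zero) hμ
  have hμne : (μ : ℚ_[2]) ≠ 0 := Int.cast_ne_zero.mpr hμz
  -- integer facts
  have hnZ : ((n : ℕ) : ℤ) = 8 * ((n / 8 : ℕ) : ℤ) + 1 := by
    have := Nat.div_add_mod n 8
    omega
  have hnodd : Odd ((n : ℕ) : ℤ) := by rw [hnZ]; exact ⟨4 * ((n / 8 : ℕ) : ℤ), by ring⟩
  have hu_odd : Odd u := by
    by_contra hcon
    rw [Int.not_odd_iff_even] at hcon
    obtain ⟨c, hc⟩ := hcon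
    rw [hrep, hc] at hnodd
    rw [show (c + c) ^ 2 - 2 * w ^ 2 = 2 * (2 * c ^ 2 - w ^ 2) by ring] at hnodd
    exact (Int.not_odd_iff_even.mpr ⟨2 * c ^ 2 - w ^ 2, by ring⟩) hnodd
  have hwμu : w = μ - u := by omega
  have hwe : Even w := by rw [hwμu]; exact hμ.sub_odd hu_odd
  obtain ⟨W, hWW⟩ := hwe
  have hW : w = 2 * W := by omega
  have hμu : u = μ - 2 * W := by omega
  -- sigma and its integrality
  set σ : ℚ_[2] := (ε : ℚ_[2]) * r with hσdef
  have hσ2 : σ ^ 2 = ((n : ℤ) : ℚ_[2]) := by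
    have : σ ^ 2 = ((ε : ℚ_[2]) * ε) * r ^ 2 := by rw [hσdef]; ring
    rw [this, hεQ, one_mul, hr]; push_cast; ring
  have hnormσ : ‖σ‖ ≤ 1 := by
    have h1 : ‖σ‖ ^ 2 ≤ 1 := by
      rw [← _root_.norm_pow, hσ2]
      exact Padic.norm_int_le_one _
    nlinarith [norm_nonneg σ]
  set s : ℤ_[2] := ⟨σ, hnormσ⟩ with hsdef
  have hscoe : ((s : ℤ_[2]) : ℚ_[2]) = σ := rfl
  have hs2 : s ^ 2 = ((n : ℤ) : ℤ_[2]) := by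
    have : ((s ^ 2 : ℤ_[2]) : ℚ_[2]) = (((n : ℤ) : ℤ_[2]) : ℚ_[2]) := by
      rw [PadicInt.coe_pow, hscoe, hσ2, PadicInt.coe_intCast]
    exact Subtype.coe_injective this
  -- notation for casts in ℤ_[2]
  set u' : ℤ_[2] := ((u : ℤ) : ℤ_[2]) with hu'def
  set μ' : ℤ_[2] := ((μ : ℤ) : ℤ_[2]) with hμ'def
  set W' : ℤ_[2] := ((W : ℤ) : ℤ_[2]) with hW'def
  have hu'μ : u' = μ' - 2 * W' := by rw [hu'def, hμ'def, hW'def, hμu]; push_cast; ring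
  -- mod 2 facts
  have hψs : PadicInt.toZModPow (p := 2) 1 s = 1 := by
    apply zmod2_sq
    rw [← map_pow, hs2, map_intCast, hnZ]
    push_cast
    rw [show ((8 : ZMod (2 ^ 1))) = 0 by decide]
    ring
  have hodd_cast : ∀ (m : ℕ) (x : ℤ), Odd x → ((x : ZMod (2 ^ m)) * (x : ZMod (2 ^ m)) - 1 = ((x * x - 1 : ℤ) : ZMod (2 ^ m))) := by
    intro m x _
    push_cast
    ring
  have hψint : ∀ x : ℤ, Odd x → PadicInt.toZModPow (p := 2) 1 ((x : ℤ) : ℤ_[2]) = 1 := by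
    intro x hx
    obtain ⟨c, hc⟩ := hx
    rw [map_intCast, hc]
    push_cast
    rw [show ((2 : ZMod (2 ^ 1))) = 0 by decide]
    ring
  have hψu : PadicInt.toZModPow (p := 2) 1 u' = 1 := hψint u hu_odd
  have hψμ : PadicInt.toZModPow (p := 2) 1 μ' = 1 := hψint μ hμ
  -- A and its half
  set A : ℤ_[2] := u' - s with hAdef
  clear_value A
  have h2A : (2 : ℤ_[2]) ∣ A := by
    rw [← pow_one (2 : ℤ_[2]), ← two_pow_dvd_iff, hAdef, map_sub, hψu, hψs, sub_self]
  obtain ⟨A₁, hA₁⟩ := h2A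
  set B₁ : ℤ_[2] := u' - A₁ with hB₁def
  clear_value B₁
  have h2B : (2 : ℤ_[2]) * B₁ = u' + s := by rw [hB₁def]; linear_combination hA₁ - hAdef
  have h8W : u' ^ 2 - ((n : ℤ) : ℤ_[2]) = 8 * W' ^ 2 := by
    have hz : (u : ℤ) ^ 2 - (n : ℤ) = 8 * W ^ 2 := by rw [hrep, hW]; ring
    rw [hu'def, hW'def]
    exact_mod_cast congrArg (fun z : ℤ => (z : ℤ_[2])) hz
  have hAB : A₁ * B₁ = 2 * W' ^ 2 := by
    have e : (2 * A₁) * (2 * B₁) = u' ^ 2 - s ^ 2 := by rw [← hA₁, h2B, hAdef]; ring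
    rw [hs2, h8W] at e
    have h4 : (4 : ℤ_[2]) * (A₁ * B₁) = 4 * (2 * W' ^ 2) := by linear_combination e
    exact mul_left_cancel₀ (by norm_num : (4 : ℤ_[2]) ≠ 0) h4
  -- the key mod-4 computation, in two cases
  have hmain : ∃ a b : ℤ_[2], a ^ 2 + b ^ 2 = μ' * A := by
    by_cases hA₁odd : PadicInt.toZModPow (p := 2) 1 A₁ = 0
    · -- A₁ even, B₁ odd
      have hψB : PadicInt.toZModPow (p := 2) 1 B₁ = 1 := by
        rw [hB₁def, map_sub, hψu, hA₁odd, sub_zero]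
      have hBunit : IsUnit B₁ := by
        rw [PadicInt.isUnit_iff]
        refine le_antisymm (PadicInt.norm_le_one _) ?_
        by_contra hlt
        push_neg at hlt
        have hdvd : (2 : ℤ_[2]) ∣ B₁ := by
          have h := (PadicInt.norm_lt_one_iff_dvd B₁).mp hlt
          simpa using h
        rw [← pow_one (2 : ℤ_[2]), ← two_pow_dvd_iff] at hdvd
        rw [hdvd] at hψB
        exact absurd hψB (by decide)
      have hBne : B₁ ≠ 0 := hBunit.ne_zero
      obtain ⟨Binv, hBinv⟩ := hBunit.exists_right_inv
      set v : ℤ_[2] := μ' * Binv with hvdef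
      clear_value v
      have hvB : v * B₁ = μ' := by rw [hvdef]; linear_combination μ' * hBinv
      have hmv : μ' * A = (2 * W') ^ 2 * v := by
        apply mul_right_cancel₀ hBne
        rw [hA₁]
        linear_combination (2 * μ') * hAB + (4 * W' ^ 2) * hvB - (8 * μ' * W' ^ 2) * hBinv - (8 * W' ^ 2 * B₁) * hvdef + (8 * W' ^ 2 * B₁ * μ') * hBinv - (8 * μ' * W' ^ 2 * B₁) * hBinv
      -- mod 8 identity for B₁
      have hid : B₁ * ((μ' - 2 * W') - B₁) = 2 * W' ^ 2 := by
        rw [← hu'μ]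
        linear_combination hAB - B₁ * hB₁def
      have hid8 := congrArg (PadicInt.toZModPow (p := 2) 3) hid
      simp only [map_mul, map_sub, map_pow, map_ofNat] at hid8
      have hkey := key8 (PadicInt.toZModPow (p := 2) 3 B₁) (PadicInt.toZModPow (p := 2) 3 μ')
        (PadicInt.toZModPow (p := 2) 3 W')
        (by rw [PadicInt.cast_toZModPow 1 3 (by norm_num)]; exact hψB)
        (by rw [PadicInt.cast_toZModPow 1 3 (by norm_num)]; exact hψμ)
        (by exact_mod_cast hid8)
      rw [← map_mul, PadicInt.cast_toZModPow 2 3 (by norm_num)] at hkey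
      -- hkey : toZModPow 2 (μ' * B₁) = 1
      have hB4 : (PadicInt.toZModPow (p := 2) 2 B₁) ^ 2 = 1 := by
        apply zmod4_sq
        rw [PadicInt.cast_toZModPow 1 2 (by norm_num)]
        exact hψB
      have hφ4v : PadicInt.toZModPow (p := 2) 2 v = 1 := by
        calc PadicInt.toZModPow (p := 2) 2 v
            = PadicInt.toZModPow (p := 2) 2 v * (PadicInt.toZModPow (p := 2) 2 B₁) ^ 2 := by
              rw [hB4, mul_one]
          _ = (PadicInt.toZModPow (p := 2) 2 (v * B₁)) * PadicInt.toZModPow (p := 2) 2 B₁ := by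
              rw [map_mul]; ring
          _ = PadicInt.toZModPow (p := 2) 2 (μ' * B₁) := by rw [hvB, ← map_mul]
          _ = 1 := hkey
      obtain ⟨x, y, hxy⟩ := sum2_of_mod4 v hφ4v
      exact ⟨2 * W' * x, 2 * W' * y, by rw [hmv, ← hxy]; ring⟩
    · -- A₁ odd
      have hψA₁ : PadicInt.toZModPow (p := 2) 1 A₁ = 1 := zmod2_ne _ hA₁odd
      have hid : A₁ * ((μ' - 2 * W') - A₁) = 2 * W' ^ 2 := by
        rw [← hu'μ]
        have : u' - A₁ = B₁ := by rw [hB₁def]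
        rw [this]
        exact hAB
      have hid8 := congrArg (PadicInt.toZModPow (p := 2) 3) hid
      simp only [map_mul, map_sub, map_pow, map_ofNat] at hid8
      have hkey := key8 (PadicInt.toZModPow (p := 2) 3 A₁) (PadicInt.toZModPow (p := 2) 3 μ')
        (PadicInt.toZModPow (p := 2) 3 W')
        (by rw [PadicInt.cast_toZModPow 1 3 (by norm_num)]; exact hψA₁)
        (by rw [PadicInt.cast_toZModPow 1 3 (by norm_num)]; exact hψμ)
        (by exact_mod_cast hid8)
      rw [← map_mul, PadicInt.cast_toZModPow 2 3 (by norm_num)] at hkey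
      obtain ⟨x, y, hxy⟩ := sum2_of_mod4 (μ' * A₁) hkey
      exact ⟨x + y, x - y, by rw [hA₁]; linear_combination 2 * hxy⟩
  -- assemble
  obtain ⟨a, b, hab⟩ := hmain
  have habQ : ((a : ℚ_[2])) ^ 2 + ((b : ℚ_[2])) ^ 2 = (μ : ℚ_[2]) * ((u : ℚ_[2]) - σ) := by
    have := congrArg (fun z : ℤ_[2] => (z : ℚ_[2])) hab
    simp only [PadicInt.coe_add, PadicInt.coe_mul, PadicInt.coe_pow, PadicInt.coe_sub,
      PadicInt.coe_intCast, hscoe, hAdef, hu'def, hμ'def] at this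
    convert this using 2 <;> push_cast <;> ring
  obtain ⟨x, y, hxy⟩ := hsol
  have hxy' : x ^ 2 + y ^ 2 = (ε : ℚ_[2]) * (μ : ℚ_[2]) := by rw [hxy]; push_cast; ring
  refine ⟨(x * a - y * b) * (μ : ℚ_[2])⁻¹, (x * b + y * a) * (μ : ℚ_[2])⁻¹, ?_⟩
  have hinv : (μ : ℚ_[2]) * (μ : ℚ_[2])⁻¹ = 1 := mul_inv_cancel₀ hμne
  have hfin : ((x * a - y * b) * (μ : ℚ_[2])⁻¹) ^ 2 + ((x * b + y * a) * (μ : ℚ_[2])⁻¹) ^ 2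
      = ((x ^ 2 + y ^ 2) * ((a : ℚ_[2]) ^ 2 + (b : ℚ_[2]) ^ 2)) * ((μ : ℚ_[2])⁻¹) ^ 2 := by
    ring
  rw [hfin, hxy', habQ, hσdef]
  linear_combination ((ε : ℚ_[2]) * ((u : ℚ_[2]) - (ε : ℚ_[2]) * r)) *
    ((μ : ℚ_[2]) * (μ : ℚ_[2])⁻¹ + 1) * hinv + (-r) * hεQ
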